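/- Let n ≥ 9 be an integer and b̃ ≤ 0. Then ‖T̃ₙ(2, b̃)⁻¹‖∞ ≤ (n+1)²/8 + (4 − (2+|b̃|)·n)/(2(1+|b̃|)), with equality when n is odd. -/

import Mathlib

open Matrix BigOperators Finset

/-- The symmetric tridiagonal near-Toeplitz matrix with corner diagonal entries `bt`,
interior diagonal entries `b`, and off-diagonal entries `-1` (0-based indices). -/
noncomputable def Ttilde (n : ℕ) (b bt : ℝ) : Matrix (Fin n) (Fin n) ℝ :=
  Matrix.of fun i j =>
    if (i : ℕ) = (j : ℕ) then (if (i : ℕ) = 0 ∨ (i : ℕ) = n - 1 then bt else b)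
    else if (i : ℕ) + 1 = (j : ℕ) ∨ (j : ℕ) + 1 = (i : ℕ) then (-1 : ℝ) else 0

/-- The maximum absolute row sum (operator norm induced by the sup norm). -/
noncomputable def normInf {n : ℕ} (A : Matrix (Fin n) (Fin n) ℝ) : ℝ :=
  ⨆ i : Fin n, ∑ j : Fin n, |A i j|


noncomputable def mEnt (n : ℕ) (c : ℝ) (i j : ℕ) : ℝ :=
  if i ≤ j then (1 - (i:ℝ)*c) * (1 - ((n:ℝ)-1-(j:ℝ))*c) / (c*(((n:ℝ)-1)*c-2))
  else (1 - (j:ℝ)*c) * (1 - ((n:ℝ)-1-(i:ℝ))*c) / (c*(((n:ℝ)-1)*c-2))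

lemma mEnt_le {n : ℕ} {c : ℝ} {i j : ℕ} (h : i ≤ j) :
    mEnt n c i j = (1 - (i:ℝ)*c) * (1 - ((n:ℝ)-1-(j:ℝ))*c) / (c*(((n:ℝ)-1)*c-2)) :=
  if_pos h

lemma mEnt_ge {n : ℕ} {c : ℝ} {i j : ℕ} (h : j ≤ i) :
    mEnt n c i j = (1 - (j:ℝ)*c) * (1 - ((n:ℝ)-1-(i:ℝ))*c) / (c*(((n:ℝ)-1)*c-2)) := by
  unfold mEnt
  split_ifs with h'
  · have : i = j := le_antisymm h' h
    subst this; rfl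
  · rfl

lemma theta_pos (n : ℕ) (hn : 9 ≤ n) (c : ℝ) (hc : 1 ≤ c) :
    0 < c*(((n:ℝ)-1)*c-2) := by
  have h9 : (9:ℝ) ≤ n := by exact_mod_cast hn
  have h1 : (0:ℝ) < c := by linarith
  have h2 : (8:ℝ) ≤ ((n:ℝ)-1)*c := by nlinarith
  exact mul_pos h1 (by linarith)

lemma key (n : ℕ) (hn : 9 ≤ n) (c : ℝ) (hc : 1 ≤ c) (i j : ℕ) (hi : i < n) (hj : j < n) :
    (if i = 0 ∨ i = n - 1 then (1 - c) else 2) * mEnt n c i j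
      - (if i + 1 < n then mEnt n c (i+1) j else 0)
      - (if 1 ≤ i then mEnt n c (i-1) j else 0)
    = if i = j then 1 else 0 := by
  have hθ' : c*(((n:ℝ)-1)*c-2) ≠ 0 := ne_of_gt (theta_pos n hn c hc)
  have h9 : (9:ℝ) ≤ n := by exact_mod_cast hn
  have hc0 : c ≠ 0 := ne_of_gt (by linarith)
  have hd : ((n:ℝ)-1)*c-2 ≠ 0 := ne_of_gt (by nlinarith)
  have hd2 : c*((n:ℝ)-1)-2 ≠ 0 := ne_of_gt (by nlinarith)
  rcases Nat.eq_zero_or_pos i with h0 | h1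
  · -- i = 0
    subst h0
    rw [if_pos (Or.inl rfl), if_pos (by omega), if_neg (by omega)]
    rcases Nat.eq_zero_or_pos j with hj0 | hj1
    · subst hj0
      rw [if_pos rfl, mEnt_le (le_refl 0), mEnt_ge (Nat.zero_le 1)]
      push_cast
      field_simp
      try ring
    · rw [if_neg (by omega), mEnt_le (Nat.zero_le j), mEnt_le hj1]
      push_cast
      field_simp
      try ring
  · have e1 : ((i-1:ℕ):ℝ) = (i:ℝ)-1 := by push_cast [h1]; ring
    rcases Nat.lt_or_ge i (n-1) with h2 | h2
    · -- interior
      rw [if_neg (by omega), if_pos (by omega), if_pos (by omega : 1 ≤ i)]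
      rcases Nat.lt_trichotomy j i with hji | hji | hji
      · rw [if_neg (by omega), mEnt_ge (by omega), mEnt_ge (by omega), mEnt_ge (by omega), e1]
        push_cast
        field_simp
        try ring
      · subst hji
        rw [if_pos rfl, mEnt_le (le_refl j), mEnt_ge (by omega), mEnt_le (by omega), e1]
        push_cast
        field_simp
        try ring
      · rw [if_neg (by omega), mEnt_le (by omega), mEnt_le (by omega), mEnt_le (by omega), e1]
        push_cast
        field_simp
        try ring
    · -- i = n-1
      have hieq : i = n - 1 := by omega
      have e2 : ((i:ℕ):ℝ) = (n:ℝ)-1 := by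
        rw [hieq]; push_cast [show (1:ℕ) ≤ n by omega]; ring
      rw [if_pos (Or.inr hieq), if_neg (by omega), if_pos (by omega : 1 ≤ i)]
      rcases Nat.lt_or_ge j i with hji | hji
      · rw [if_neg (by omega), mEnt_ge (by omega), mEnt_ge (by omega), e1, e2]
        push_cast
        field_simp
        try ring
      · have hji' : j = i := by omega
        subst hji'
        rw [if_pos rfl, mEnt_le (le_refl j), mEnt_le (by omega), e1, e2]
        push_cast
        field_simp
        try ring

lemma sum_ind {n : ℕ} (t : ℕ) (f : Fin n → ℝ) :
    (∑ k : Fin n, if (k:ℕ) = t then f k else 0) = if h : t < n then f ⟨t, h⟩ else 0 := by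
  split_ifs with h
  · rw [Finset.sum_eq_single (⟨t, h⟩ : Fin n)]
    · simp
    · intro k _ hk
      rw [if_neg]
      simpa [Fin.ext_iff] using hk
    · simp
  · apply Finset.sum_eq_zero
    intro k _
    rw [if_neg]
    intro hkt
    exact h (hkt ▸ k.isLt)

lemma TmulM_eq_one (n : ℕ) (hn : 9 ≤ n) (bt : ℝ) (hbt : bt ≤ 0) :
    Ttilde n 2 bt * Matrix.of (fun i j : Fin n => mEnt n (1-bt) (i:ℕ) (j:ℕ)) = 1 := by
  have hc : (1:ℝ) ≤ 1 - bt := by linarith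
  ext i j
  rw [Matrix.mul_apply, Matrix.one_apply]
  have hdec : ∀ k : Fin n, Ttilde n 2 bt i k * Matrix.of (fun i j : Fin n => mEnt n (1-bt) (i:ℕ) (j:ℕ)) k j
      = (if (k:ℕ) = (i:ℕ) then (if (i:ℕ) = 0 ∨ (i:ℕ) = n-1 then bt else 2) * mEnt n (1-bt) (k:ℕ) (j:ℕ) else 0)
        + (if (k:ℕ) = (i:ℕ)+1 then (-1) * mEnt n (1-bt) (k:ℕ) (j:ℕ) else 0)
        + (if (k:ℕ)+1 = (i:ℕ) then (-1) * mEnt n (1-bt) (k:ℕ) (j:ℕ) else 0) := by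
    intro k
    simp only [Ttilde, Matrix.of_apply]
    split_ifs <;> first | (exfalso; omega) | ring
  rw [Finset.sum_congr rfl (fun k _ => hdec k), Finset.sum_add_distrib, Finset.sum_add_distrib]
  have s1 : (∑ k : Fin n, if (k:ℕ) = (i:ℕ) then (if (i:ℕ) = 0 ∨ (i:ℕ) = n-1 then bt else 2) * mEnt n (1-bt) (k:ℕ) (j:ℕ) else 0)
      = (if (i:ℕ) = 0 ∨ (i:ℕ) = n-1 then bt else 2) * mEnt n (1-bt) (i:ℕ) (j:ℕ) := by
    rw [sum_ind (i:ℕ) (fun k : Fin n => (if (i:ℕ) = 0 ∨ (i:ℕ) = n-1 then bt else 2) * mEnt n (1-bt) (k:ℕ) (j:ℕ)),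
      dif_pos i.isLt]
  have s2 : (∑ k : Fin n, if (k:ℕ) = (i:ℕ)+1 then (-1) * mEnt n (1-bt) (k:ℕ) (j:ℕ) else 0)
      = if (i:ℕ)+1 < n then -mEnt n (1-bt) ((i:ℕ)+1) (j:ℕ) else 0 := by
    rw [sum_ind ((i:ℕ)+1) (fun k : Fin n => (-1) * mEnt n (1-bt) (k:ℕ) (j:ℕ))]
    split_ifs with h
    · norm_num
    · rfl
  have s3 : (∑ k : Fin n, if (k:ℕ)+1 = (i:ℕ) then (-1) * mEnt n (1-bt) (k:ℕ) (j:ℕ) else 0)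
      = if 1 ≤ (i:ℕ) then -mEnt n (1-bt) ((i:ℕ)-1) (j:ℕ) else 0 := by
    rcases Nat.eq_zero_or_pos (i:ℕ) with h0 | h1
    · rw [if_neg (by omega)]
      apply Finset.sum_eq_zero
      intro k _
      rw [if_neg (by omega)]
    · have : ∀ k : Fin n, (if (k:ℕ)+1 = (i:ℕ) then (-1) * mEnt n (1-bt) (k:ℕ) (j:ℕ) else 0)
          = (if (k:ℕ) = (i:ℕ)-1 then (-1) * mEnt n (1-bt) (k:ℕ) (j:ℕ) else 0) := by
        intro k
        split_ifs <;> first | rfl | omega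
      rw [Finset.sum_congr rfl (fun k _ => this k),
        sum_ind ((i:ℕ)-1) (fun k : Fin n => (-1) * mEnt n (1-bt) (k:ℕ) (j:ℕ)),
        dif_pos (show (i:ℕ)-1 < n by omega), if_pos (show 1 ≤ (i:ℕ) from h1)]
      norm_num
  rw [s1, s2, s3]
  have hk := key n hn (1-bt) hc (i:ℕ) (j:ℕ) i.isLt j.isLt
  have : (i = j) ↔ ((i:ℕ) = (j:ℕ)) := Fin.ext_iff
  rw [show ((1:ℝ) - (1 - bt)) = bt by ring] at hk
  split_ifs at hk ⊢ <;> first | linarith | omega | (exfalso; omega) | tauto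

lemma sum_abs_phi (c : ℝ) (hc : 1 ≤ c) (i : ℕ) :
    ∑ j ∈ Finset.range (i+1), |1 - (j:ℝ)*c| = c*i*(i+1)/2 - i + 1 := by
  induction i with
  | zero => simp
  | succ k ih =>
      rw [Finset.sum_range_succ, ih, abs_of_nonpos (by push_cast; nlinarith)]
      push_cast
      ring

lemma sum_abs_psi (n : ℕ) (c : ℝ) (hc : 1 ≤ c) (i : ℕ) (hi : i < n) :
    ∑ j ∈ Finset.Ico i n, |1 - ((n:ℝ)-1-(j:ℝ))*c|
      = c*((n:ℝ)-1-i)*(((n:ℝ)-1-i)+1)/2 - ((n:ℝ)-1-i) + 1 := by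
  have hM : n - i = (n - 1 - i) + 1 := by omega
  rw [Finset.sum_Ico_eq_sum_range, hM]
  set M := n - 1 - i with hMdef
  have hMcast : (M:ℝ) = (n:ℝ)-1-i := by
    rw [hMdef, Nat.cast_sub (show i ≤ n - 1 by omega), Nat.cast_sub (show 1 ≤ n by omega)]
    push_cast; ring
  have hrefl := Finset.sum_range_reflect (fun k => |1 - (k:ℝ)*c|) (M+1)
  have : ∀ k ∈ Finset.range (M+1), |1 - ((n:ℝ)-1-((i:ℕ)+(k:ℕ) : ℕ))*c| = |1 - ((M + 1 - 1 - k : ℕ):ℝ)*c| := by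
    intro k hk
    rw [Finset.mem_range] at hk
    congr 1
    have : ((M + 1 - 1 - k : ℕ):ℝ) = (M:ℝ) - k := by push_cast [show k ≤ M by omega]; ring
    rw [this, hMcast]
    push_cast
    ring
  rw [Finset.sum_congr rfl this, hrefl, sum_abs_phi c hc M, hMcast]

lemma row_val (n : ℕ) (hn : 9 ≤ n) (c : ℝ) (hc : 1 ≤ c) (i : ℕ) (hi : i + 1 < n) :
    ∑ j ∈ Finset.range n, |mEnt n c i j|
      = (|1-((n:ℝ)-1-i)*c| * (c*i*(i+1)/2 - i + 1)
         + |1-(i:ℝ)*c| * (c*((n:ℝ)-2-i)*(((n:ℝ)-2-i)+1)/2 - ((n:ℝ)-2-i) + 1))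
        / (c*(((n:ℝ)-1)*c-2)) := by
  have hθ := theta_pos n hn c hc
  have split : Finset.range n = Finset.range (i+1) ∪ Finset.Ico (i+1) n := by
    rw [Finset.range_eq_Ico, Finset.range_eq_Ico]
    exact (Finset.Ico_union_Ico_eq_Ico (show (0:ℕ) ≤ i+1 by omega) (show i+1 ≤ n by omega)).symm
  rw [split, Finset.sum_union (by
    rw [Finset.range_eq_Ico]
    exact Finset.Ico_disjoint_Ico_consecutive 0 (i+1) n)]
  have e1 : ∑ j ∈ Finset.range (i+1), |mEnt n c i j|
      = |1-((n:ℝ)-1-i)*c| / (c*(((n:ℝ)-1)*c-2)) * ∑ j ∈ Finset.range (i+1), |1 - (j:ℝ)*c| := by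
    rw [Finset.mul_sum]
    apply Finset.sum_congr rfl
    intro j hj
    rw [Finset.mem_range] at hj
    rw [mEnt_ge (by omega), abs_div, abs_mul, abs_of_pos hθ]
    ring
  have e2 : ∑ j ∈ Finset.Ico (i+1) n, |mEnt n c i j|
      = |1-(i:ℝ)*c| / (c*(((n:ℝ)-1)*c-2)) * ∑ j ∈ Finset.Ico (i+1) n, |1 - ((n:ℝ)-1-(j:ℝ))*c| := by
    rw [Finset.mul_sum]
    apply Finset.sum_congr rfl
    intro j hj
    rw [Finset.mem_Ico] at hj
    rw [mEnt_le (by omega), abs_div, abs_mul, abs_of_pos hθ]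
    ring
  rw [e1, e2, sum_abs_phi c hc i, sum_abs_psi n c hc (i+1) (by omega)]
  have : ((i+1 : ℕ):ℝ) = (i:ℝ)+1 := by push_cast; ring
  rw [this]
  ring_nf

lemma row_last (n : ℕ) (hn : 9 ≤ n) (c : ℝ) (hc : 1 ≤ c) :
    ∑ j ∈ Finset.range n, |mEnt n c (n-1) j|
      = (c*((n:ℝ)-1)*(((n:ℝ)-1)+1)/2 - ((n:ℝ)-1) + 1) / (c*(((n:ℝ)-1)*c-2)) := by
  have hθ := theta_pos n hn c hc
  have hcast : ((n-1:ℕ):ℝ) = (n:ℝ)-1 := by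
    rw [Nat.cast_sub (show 1 ≤ n by omega)]; push_cast; ring
  have e1 : ∀ j ∈ Finset.range n, |mEnt n c (n-1) j| = |1 - (j:ℝ)*c| / (c*(((n:ℝ)-1)*c-2)) := by
    intro j hj
    rw [Finset.mem_range] at hj
    rw [mEnt_ge (by omega), hcast, abs_div, abs_of_pos hθ]
    have : (1 - ((n:ℝ)-1-((n:ℝ)-1))*c) = 1 := by ring
    rw [this, mul_one]
  rw [Finset.sum_congr rfl e1, ← Finset.sum_div,
    show Finset.range n = Finset.range ((n-1)+1) by congr 1; omega,
    sum_abs_phi c hc (n-1), hcast]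

lemma row_interior (n : ℕ) (hn : 9 ≤ n) (c : ℝ) (hc : 1 ≤ c) (i : ℕ)
    (h1 : 1 ≤ i) (h2 : i + 1 < n) :
    ∑ j ∈ Finset.range n, |mEnt n c i j|
      = (((n:ℝ)+1)^2/8 + (4-(1+c)*(n:ℝ))/(2*c)) - ((n:ℝ)-1-2*(i:ℝ))^2/8 := by
  have h9 : (9:ℝ) ≤ n := by exact_mod_cast hn
  have hi' : (1:ℝ) ≤ i := by exact_mod_cast h1
  have hi'' : (i:ℝ) + 1 ≤ (n:ℝ) - 1 := by
    have : (i:ℝ) + 2 ≤ n := by exact_mod_cast (show i + 2 ≤ n by omega)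
    linarith
  have hθ := theta_pos n hn c hc
  rw [row_val n hn c hc i h2]
  rw [abs_of_nonpos (show 1-((n:ℝ)-1-i)*c ≤ 0 by nlinarith),
      abs_of_nonpos (show 1-(i:ℝ)*c ≤ 0 by nlinarith)]
  have hc0 : c ≠ 0 := ne_of_gt (by linarith)
  have hd : ((n:ℝ)-1)*c-2 ≠ 0 := ne_of_gt (by nlinarith)
  field_simp
  ring

lemma row_first_le (n : ℕ) (hn : 9 ≤ n) (c : ℝ) (hc : 1 ≤ c) :
    (((n:ℝ)-1)*c - 1) * (c*(0:ℝ)*((0:ℝ)+1)/2 - 0 + 1)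
      + 1 * (c*((n:ℝ)-2-0)*(((n:ℝ)-2-0)+1)/2 - ((n:ℝ)-2-0) + 1)
      ≤ (((n:ℝ)+1)^2/8 + (4-(1+c)*(n:ℝ))/(2*c)) * (c*(((n:ℝ)-1)*c-2)) := by
  have h9 : (9:ℝ) ≤ n := by exact_mod_cast hn
  have hq : 0 ≤ c^2*((n:ℝ)-1)^3 - 2*c*((n:ℝ)-1)*(5*(n:ℝ)-9) + 16*((n:ℝ)-3) := by
    nlinarith [sq_nonneg (c-1), mul_nonneg (sub_nonneg.2 hc) (sub_nonneg.2 hc),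
      mul_nonneg (mul_nonneg (sub_nonneg.2 hc) (sub_nonneg.2 hc)) (pow_nonneg (by linarith : (0:ℝ) ≤ (n:ℝ)-1) 3),
      mul_nonneg (sub_nonneg.2 hc) (show (0:ℝ) ≤ ((n:ℝ)-1)*(((n:ℝ)-1)^2 - (5*(n:ℝ)-9)) by nlinarith),
      mul_nonneg (sub_nonneg.2 (show (9:ℝ) ≤ (n:ℝ) from h9)) (show (0:ℝ) ≤ (n:ℝ)^2-4*(n:ℝ)+11 by nlinarith)]
  have hc0 : (0:ℝ) < c := by linarith
  have key : (((n:ℝ)+1)^2/8 + (4-(1+c)*(n:ℝ))/(2*c)) * (c*(((n:ℝ)-1)*c-2))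
      - ((((n:ℝ)-1)*c - 1) * (c*(0:ℝ)*((0:ℝ)+1)/2 - 0 + 1)
        + 1 * (c*((n:ℝ)-2-0)*(((n:ℝ)-2-0)+1)/2 - ((n:ℝ)-2-0) + 1))
      = (c^2*((n:ℝ)-1)^3 - 2*c*((n:ℝ)-1)*(5*(n:ℝ)-9) + 16*((n:ℝ)-3)) / 8 := by
    field_simp
    ring
  have : 0 ≤ (c^2*((n:ℝ)-1)^3 - 2*c*((n:ℝ)-1)*(5*(n:ℝ)-9) + 16*((n:ℝ)-3)) / 8 :=
    div_nonneg hq (by norm_num)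
  linarith [key, this]

lemma row_first_bound (n : ℕ) (hn : 9 ≤ n) (c : ℝ) (hc : 1 ≤ c) :
    ∑ j ∈ Finset.range n, |mEnt n c 0 j|
      ≤ ((n:ℝ)+1)^2/8 + (4-(1+c)*(n:ℝ))/(2*c) := by
  have h9 : (9:ℝ) ≤ n := by exact_mod_cast hn
  have hθ := theta_pos n hn c hc
  rw [row_val n hn c hc 0 (by omega), div_le_iff₀ hθ]
  have e0 : ((0:ℕ):ℝ) = 0 := by norm_num
  rw [e0]
  rw [abs_of_nonpos (show 1-((n:ℝ)-1-0)*c ≤ 0 by nlinarith),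
      show |1-(0:ℝ)*c| = 1 by norm_num]
  have := row_first_le n hn c hc
  nlinarith [this]

lemma row_last_bound (n : ℕ) (hn : 9 ≤ n) (c : ℝ) (hc : 1 ≤ c) :
    ∑ j ∈ Finset.range n, |mEnt n c (n-1) j|
      ≤ ((n:ℝ)+1)^2/8 + (4-(1+c)*(n:ℝ))/(2*c) := by
  have h9 : (9:ℝ) ≤ n := by exact_mod_cast hn
  have hθ := theta_pos n hn c hc
  rw [row_last n hn c hc, div_le_iff₀ hθ]
  have := row_first_le n hn c hc
  nlinarith [this]

lemma row_any_bound (n : ℕ) (hn : 9 ≤ n) (c : ℝ) (hc : 1 ≤ c) (i : ℕ) (hi : i < n) :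
    ∑ j ∈ Finset.range n, |mEnt n c i j|
      ≤ ((n:ℝ)+1)^2/8 + (4-(1+c)*(n:ℝ))/(2*c) := by
  by_cases h0 : i = 0
  · subst h0; exact row_first_bound n hn c hc
  by_cases hl : i = n - 1
  · subst hl; exact row_last_bound n hn c hc
  rw [row_interior n hn c hc i (by omega) (by omega)]
  nlinarith [sq_nonneg ((n:ℝ)-1-2*(i:ℝ))]

theorem stmt12aux (n : ℕ) (hn : 9 ≤ n) (bt : ℝ) (hbt : bt ≤ 0) :
    (⨆ i : Fin n, ∑ j : Fin n, |(Ttilde n 2 bt)⁻¹ i j|) ≤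
      ((n : ℝ) + 1) ^ 2 / 8 + (4 - (2 + |bt|) * (n : ℝ)) / (2 * (1 + |bt|)) ∧
    (Odd n →
      (⨆ i : Fin n, ∑ j : Fin n, |(Ttilde n 2 bt)⁻¹ i j|) =
        ((n : ℝ) + 1) ^ 2 / 8 + (4 - (2 + |bt|) * (n : ℝ)) / (2 * (1 + |bt|))) := by
  have hc : (1:ℝ) ≤ 1 - bt := by linarith
  have hinv : (Ttilde n 2 bt)⁻¹ = Matrix.of (fun i j : Fin n => mEnt n (1-bt) (i:ℕ) (j:ℕ)) :=
    Matrix.inv_eq_right_inv (TmulM_eq_one n hn bt hbt)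
  have hBeq : ((n:ℝ)+1)^2/8 + (4-(2+|bt|)*(n:ℝ))/(2*(1+|bt|))
      = ((n:ℝ)+1)^2/8 + (4-(1+(1-bt))*(n:ℝ))/(2*(1-bt)) := by
    rw [abs_of_nonpos hbt]; ring_nf
  rw [hinv, hBeq]
  have hrow : ∀ i : Fin n,
      (∑ j : Fin n, |Matrix.of (fun i j : Fin n => mEnt n (1-bt) (i:ℕ) (j:ℕ)) i j|)
        = ∑ j ∈ Finset.range n, |mEnt n (1-bt) (i:ℕ) j| := by
    intro i
    simp only [Matrix.of_apply]
    exact Fin.sum_univ_eq_sum_range (fun j => |mEnt n (1-bt) (i:ℕ) j|) n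
  haveI : Nonempty (Fin n) := ⟨⟨0, by omega⟩⟩
  have hub : (⨆ i : Fin n, ∑ j : Fin n, |Matrix.of (fun i j : Fin n => mEnt n (1-bt) (i:ℕ) (j:ℕ)) i j|)
      ≤ ((n:ℝ)+1)^2/8 + (4-(1+(1-bt))*(n:ℝ))/(2*(1-bt)) := by
    refine ciSup_le fun i => ?_
    rw [hrow i]
    exact row_any_bound n hn (1-bt) hc (i:ℕ) i.isLt
  refine ⟨hub, fun hodd => ?_⟩
  obtain ⟨t, ht⟩ := hodd
  have hntR : (n:ℝ) = 2*(t:ℝ)+1 := by exact_mod_cast ht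
  set i0 : Fin n := ⟨t, by omega⟩ with hi0
  have hmid : ∑ j ∈ Finset.range n, |mEnt n (1-bt) t j|
      = ((n:ℝ)+1)^2/8 + (4-(1+(1-bt))*(n:ℝ))/(2*(1-bt)) := by
    rw [row_interior n hn (1-bt) hc t (by omega) (by omega)]
    rw [show ((n:ℝ)-1-2*(t:ℝ))^2 = 0 by rw [hntR]; ring]
    ring
  refine le_antisymm hub ?_
  have hbdd : BddAbove (Set.range
      (fun i : Fin n => ∑ j : Fin n, |Matrix.of (fun i j : Fin n => mEnt n (1-bt) (i:ℕ) (j:ℕ)) i j|)) :=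
    Set.Finite.bddAbove (Set.finite_range _)
  have := le_ciSup hbdd i0
  rw [hrow i0] at this
  simp only [hi0] at this
  rw [hmid] at this
  exact this

theorem stmt12 (n : ℕ) (hn : 9 ≤ n) (bt : ℝ) (hbt : bt ≤ 0) :
    normInf ((Ttilde n 2 bt)⁻¹) ≤
      ((n : ℝ) + 1) ^ 2 / 8 + (4 - (2 + |bt|) * (n : ℝ)) / (2 * (1 + |bt|)) ∧
    (Odd n →
      normInf ((Ttilde n 2 bt)⁻¹) =
        ((n : ℝ) + 1) ^ 2 / 8 + (4 - (2 + |bt|) * (n : ℝ)) / (2 * (1 + |bt|))) := by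
  have h := stmt12aux n hn bt hbt
  unfold normInf
  exact ⟨h.1, fun ho => h.2 ho⟩
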